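/- Let f(x₁, x₂) = 2 cos(πx₁) cos(πx₂) and let x^t, x⁰ ∈ ℝ² with d₁ = x₁^t − x₁⁰, d₂ = x₂^t − x₂⁰ satisfying d₁ + d₂ ≠ 0 and d₁ − d₂ ≠ 0. Then the integrated gradients admit the closed form IG_i(x^t | x⁰) = d_i [ G^t − G⁰ − (−1)^i (H^t − H⁰) ] for i = 1, 2, where G^k = cos(π(x₁^k + x₂^k)) / (d₁ + d₂) and H^k = cos(π(x₁^k − x₂^k)) / (d₁ − d₂) for k ∈ {t, 0}. -/

import Mathlib

open Real intervalIntegral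

private lemma plane_deriv (A P : ℝ) (hP : P ≠ 0) (α : ℝ) :
    HasDerivAt (fun t => Real.cos (Real.pi * (A + t * P)) / P)
      (-Real.pi * Real.sin (Real.pi * (A + α * P))) α := by
  have h : HasDerivAt (fun t : ℝ => Real.pi * (A + t * P)) (Real.pi * P) α := by
    simpa using (((hasDerivAt_id α).mul_const P).const_add A).const_mul Real.pi
  have h2 := (h.cos).div_const P
  refine h2.congr_deriv ?_
  rw [div_eq_iff hP]
  ring

private lemma key (a b p q : ℝ) (hpq1 : p + q ≠ 0) (hpq2 : p - q ≠ 0) :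
    (∫ α in (0:ℝ)..1,
        (-2 * Real.pi) * Real.sin (Real.pi * (a + α * p)) * Real.cos (Real.pi * (b + α * q)))
    = (Real.cos (Real.pi * ((a + b) + 1 * (p + q))) / (p + q)
        + Real.cos (Real.pi * ((a - b) + 1 * (p - q))) / (p - q))
      - (Real.cos (Real.pi * ((a + b) + 0 * (p + q))) / (p + q)
        + Real.cos (Real.pi * ((a - b) + 0 * (p - q))) / (p - q)) := by
  have hF : ∀ α ∈ Set.uIcc (0:ℝ) 1,
      HasDerivAt (fun t => Real.cos (Real.pi * ((a + b) + t * (p + q))) / (p + q)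
          + Real.cos (Real.pi * ((a - b) + t * (p - q))) / (p - q))
        ((-2 * Real.pi) * Real.sin (Real.pi * (a + α * p)) * Real.cos (Real.pi * (b + α * q))) α := by
    intro α _
    have h := (plane_deriv (a + b) (p + q) hpq1 α).add (plane_deriv (a - b) (p - q) hpq2 α)
    refine h.congr_deriv ?_
    have e1 : Real.pi * ((a + b) + α * (p + q))
        = Real.pi * (a + α * p) + Real.pi * (b + α * q) := by ring
    have e2 : Real.pi * ((a - b) + α * (p - q))
        = Real.pi * (a + α * p) - Real.pi * (b + α * q) := by ring
    rw [e1, e2, Real.sin_add, Real.sin_sub]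
    ring
  have hc : IntervalIntegrable
      (fun α => (-2 * Real.pi) * Real.sin (Real.pi * (a + α * p)) * Real.cos (Real.pi * (b + α * q)))
      MeasureTheory.volume 0 1 := by
    apply Continuous.intervalIntegrable
    fun_prop
  simpa using intervalIntegral.integral_eq_sub_of_hasDerivAt hF hc

theorem stmt_13 (f : ℝ → ℝ → ℝ)
    (hf : ∀ a b : ℝ, f a b = 2 * Real.cos (Real.pi * a) * Real.cos (Real.pi * b))
    (xt1 xt2 x01 x02 d1 d2 : ℝ) (hd1 : d1 = xt1 - x01) (hd2 : d2 = xt2 - x02)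
    (h1 : d1 + d2 ≠ 0) (h2 : d1 - d2 ≠ 0)
    (Gt G0 Ht H0 : ℝ)
    (hGt : Gt = Real.cos (Real.pi * (xt1 + xt2)) / (d1 + d2))
    (hG0 : G0 = Real.cos (Real.pi * (x01 + x02)) / (d1 + d2))
    (hHt : Ht = Real.cos (Real.pi * (xt1 - xt2)) / (d1 - d2))
    (hH0 : H0 = Real.cos (Real.pi * (x01 - x02)) / (d1 - d2)) :
    ((xt1 - x01) *
        (∫ α in (0:ℝ)..1,
          deriv (fun s => f s (x02 + α * (xt2 - x02))) (x01 + α * (xt1 - x01)))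
      = d1 * (Gt - G0 - (-1 : ℝ) ^ (1 : ℕ) * (Ht - H0))) ∧
    ((xt2 - x02) *
        (∫ α in (0:ℝ)..1,
          deriv (fun s => f (x01 + α * (xt1 - x01)) s) (x02 + α * (xt2 - x02)))
      = d2 * (Gt - G0 - (-1 : ℝ) ^ (2 : ℕ) * (Ht - H0))) := by
  subst hd1 hd2 hGt hG0 hHt hH0
  have hD1 : ∀ c a : ℝ,
      deriv (fun s => 2 * Real.cos (Real.pi * s) * Real.cos (Real.pi * c)) a
        = (-2 * Real.pi) * Real.sin (Real.pi * a) * Real.cos (Real.pi * c) := by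
    intro c a
    have h : HasDerivAt (fun s => 2 * Real.cos (Real.pi * s) * Real.cos (Real.pi * c))
        ((2 * (-Real.sin (Real.pi * a) * Real.pi)) * Real.cos (Real.pi * c)) a := by
      have hb : HasDerivAt (fun s : ℝ => Real.pi * s) Real.pi a := by
        simpa using (hasDerivAt_id a).const_mul Real.pi
      simpa [mul_comm, mul_assoc] using ((hb.cos.const_mul 2).mul_const (Real.cos (Real.pi * c)))
    rw [h.deriv]; ring
  have hD2 : ∀ c a : ℝ,
      deriv (fun s => 2 * Real.cos (Real.pi * c) * Real.cos (Real.pi * s)) a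
        = (-2 * Real.pi) * Real.sin (Real.pi * a) * Real.cos (Real.pi * c) := by
    intro c a
    have hb : HasDerivAt (fun s : ℝ => Real.pi * s) Real.pi a := by
      simpa using (hasDerivAt_id a).const_mul Real.pi
    have h : HasDerivAt (fun s => 2 * Real.cos (Real.pi * c) * Real.cos (Real.pi * s))
        ((2 * Real.cos (Real.pi * c)) * (-Real.sin (Real.pi * a) * Real.pi)) a := by
      simpa [mul_assoc] using (hb.cos).const_mul (2 * Real.cos (Real.pi * c))
    rw [h.deriv]; ring
  constructor
  · simp only [hf, hD1]
    rw [key x01 x02 (xt1 - x01) (xt2 - x02) h1 h2]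
    have e1 : Real.pi * ((x01 + x02) + 1 * ((xt1 - x01) + (xt2 - x02))) = Real.pi * (xt1 + xt2) := by ring
    have e2 : Real.pi * ((x01 - x02) + 1 * ((xt1 - x01) - (xt2 - x02))) = Real.pi * (xt1 - xt2) := by ring
    have e3 : Real.pi * ((x01 + x02) + 0 * ((xt1 - x01) + (xt2 - x02))) = Real.pi * (x01 + x02) := by ring
    have e4 : Real.pi * ((x01 - x02) + 0 * ((xt1 - x01) - (xt2 - x02))) = Real.pi * (x01 - x02) := by ring
    rw [e1, e2, e3, e4]
    ring
  · simp only [hf, hD2]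
    have h1' : (xt2 - x02) + (xt1 - x01) ≠ 0 := by
      intro h; exact h1 (by linarith)
    have h2' : (xt2 - x02) - (xt1 - x01) ≠ 0 := by
      intro h; apply h2; linarith
    rw [key x02 x01 (xt2 - x02) (xt1 - x01) h1' h2']
    have e1 : Real.pi * ((x02 + x01) + 1 * ((xt2 - x02) + (xt1 - x01))) = Real.pi * (xt1 + xt2) := by ring
    have e2 : Real.pi * ((x02 - x01) + 1 * ((xt2 - x02) - (xt1 - x01))) = Real.pi * (xt2 - xt1) := by ring
    have e3 : Real.pi * ((x02 + x01) + 0 * ((xt2 - x02) + (xt1 - x01))) = Real.pi * (x01 + x02) := by ring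
    have e4 : Real.pi * ((x02 - x01) + 0 * ((xt2 - x02) - (xt1 - x01))) = Real.pi * (x02 - x01) := by ring
    rw [e1, e2, e3, e4]
    have c1 : Real.cos (Real.pi * (xt2 - xt1)) = Real.cos (Real.pi * (xt1 - xt2)) := by
      rw [show Real.pi * (xt2 - xt1) = -(Real.pi * (xt1 - xt2)) by ring, Real.cos_neg]
    have c2 : Real.cos (Real.pi * (x02 - x01)) = Real.cos (Real.pi * (x01 - x02)) := by
      rw [show Real.pi * (x02 - x01) = -(Real.pi * (x01 - x02)) by ring, Real.cos_neg]
    rw [c1, c2]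
    field_simp
    ring
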